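/- arXiv:2504.16514 — 4 statements merged into one kernel-verified Lean document; each statement's English description precedes it below -/
import Mathlib

section
/- Let s be a sesquilinear form on a finitely generated right Q-module V, let v ∈ V, and let ξ ∈ I be a nonzero vector with a(ξ, s(v,v)·ξ) = 0. Let ξ' ∈ I be such that (ξ, ξ') is a k-basis of I, and let x ∈ Q = End_k(I) be an endomorphism with x·ξ = x·ξ' = ξ. Then s(v·x, v·x) ∈ k·1. In particular, if moreover v·x ≠ 0, then the generalized quadratic form [s] is isotropic, i.e. there is a nonzero u ∈ V with s(u,u) ∈ k·1. -/
open scoped TensorProduct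

theorem isotropy_descends_in_split_case
    -- k a field, I a 2-dimensional k-vector space, a a nonzero alternating bilinear form,
    -- Q = End_k(I) with its canonical (symplectic) involution conj
    (k : Type) [Field k] (I : Type) [AddCommGroup I] [Module k I]
    (hdim : Module.finrank k I = 2)
    (a : I →ₗ[k] I →ₗ[k] k) (halt : ∀ ξ : I, a ξ ξ = 0) (ha0 : a ≠ 0)
    (conj : Module.End k I → Module.End k I)
    (hconj : ∀ (x : Module.End k I) (ξ η : I), a ξ (x η) = a (conj x ξ) η)
    -- V a finitely generated right Q-module, s a sesquilinear form on V
    (V : Type) [AddCommGroup V] [Module (Module.End k I)ᵐᵒᵖ V]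
    [Module.Finite (Module.End k I)ᵐᵒᵖ V]
    (s : V → V → Module.End k I)
    (hs1 : ∀ v v' w : V, s (v + v') w = s v w + s v' w)
    (hs2 : ∀ v w w' : V, s v (w + w') = s v w + s v w')
    (hsesq : ∀ (v w : V) (x y : Module.End k I),
      s (MulOpposite.op x • v) (MulOpposite.op y • w) = conj x * s v w * y)
    -- v ∈ V and a nonzero ξ ∈ I with a(ξ, s(v,v)·ξ) = 0
    (v : V) (ξ : I) (hξ : ξ ≠ 0) (hiso : a ξ (s v v ξ) = 0)
    -- ξ' completes ξ to a k-basis of I, and x ∈ Q sends both ξ and ξ' to ξ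
    (ξ' : I) (hli : LinearIndependent k ![ξ, ξ'])
    (hspan : Submodule.span k {ξ, ξ'} = ⊤)
    (x : Module.End k I) (hx1 : x ξ = ξ) (hx2 : x ξ' = ξ) :
    (∃ c : k, s (MulOpposite.op x • v) (MulOpposite.op x • v) =
      algebraMap k (Module.End k I) c) ∧
    (MulOpposite.op x • v ≠ 0 →
      ∃ w : V, w ≠ 0 ∧ ∃ c : k, s w w = algebraMap k (Module.End k I) c) := by

  -- every element of I is a combination of ξ and ξ'
  have hmem : ∀ η : I, ∃ p q : k, p • ξ + q • ξ' = η := by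
    intro η
    have : η ∈ Submodule.span k {ξ, ξ'} := hspan ▸ Submodule.mem_top
    rwa [Submodule.mem_span_pair] at this
  have hanti : a ξ' ξ = - a ξ ξ' := by
    have h := halt (ξ + ξ')
    simp only [map_add, LinearMap.add_apply, halt] at h
    linear_combination h
  have hd : a ξ ξ' ≠ 0 := by
    intro h
    apply ha0
    ext η₁ η₂
    obtain ⟨p, q, rfl⟩ := hmem η₁
    obtain ⟨r, t, rfl⟩ := hmem η₂
    simp [map_add, map_smul, halt, h, hanti]
  -- conj x kills ξ
  have hcx : conj x ξ = 0 := by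
    obtain ⟨p, q, hpq⟩ := hmem (conj x ξ)
    have h1 : a (conj x ξ) ξ = 0 := by rw [← hconj, hx1, halt]
    have h2 : a (conj x ξ) ξ' = 0 := by rw [← hconj, hx2, halt]
    rw [← hpq] at h1 h2
    simp only [map_add, map_smul, LinearMap.add_apply, LinearMap.smul_apply, halt,
      smul_eq_mul, mul_zero, zero_add, add_zero, hanti] at h1 h2
    have hq : q = 0 := by
      have : q * a ξ ξ' = 0 := by linear_combination -h1
      exact (mul_eq_zero.mp this).resolve_right hd
    have hp : p = 0 := by
      have : p * a ξ ξ' = 0 := by linear_combination h2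
      exact (mul_eq_zero.mp this).resolve_right hd
    rw [← hpq, hp, hq]; simp
  -- s v v ξ is a multiple of ξ
  obtain ⟨α, β, hαβ⟩ := hmem (s v v ξ)
  have hβ : β = 0 := by
    rw [← hαβ] at hiso
    simp only [map_add, map_smul, halt, smul_eq_mul, mul_zero, zero_add] at hiso
    exact (mul_eq_zero.mp hiso).resolve_right hd
  have hsvvξ : s v v ξ = α • ξ := by rw [← hαβ, hβ]; simp
  have key : s (MulOpposite.op x • v) (MulOpposite.op x • v) = 0 := by
    rw [hsesq]
    ext η
    obtain ⟨p, q, rfl⟩ := hmem η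
    simp only [Module.End.mul_apply, map_add, map_smul, hx1, hx2, hsvvξ, hcx,
      smul_zero, add_zero, zero_add, LinearMap.zero_apply]
  constructor
  · exact ⟨0, by rw [key]; simp⟩
  · intro hne
    exact ⟨MulOpposite.op x • v, hne, 0, by rw [key]; simp⟩
end

section
/- Let I = Q_F·ε be the left ideal of Q_F generated by ε = 1 + j·t⁻¹. Then: (i) I = K(t)·ε = {f·ε : f ∈ K(t)}; (ii) every element of I has a unique expression of the form f·ε with f ∈ K(t) (in particular I is a 2-dimensional F-vector space); (iii) the map Q_F → End_F(I) sending each x ∈ Q_F to the operator of left multiplication by x on I is an isomorphism of F-algebras. -/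
open scoped TensorProduct

theorem ideal_I_and_endomorphism_algebra
    -- k is a field, K/k a degree-2 Galois extension with nontrivial automorphism ι,
    -- b a nonzero element of k
    (k K : Type) [Field k] [Field K] [Algebra k K]
    (hrank : Module.finrank k K = 2)
    (ι : K ≃ₐ[k] K) (hι : ∃ x : K, ι x ≠ x)
    (hι2 : ∀ x : K, ι (ι x) = x)
    (hfix : ∀ x : K, ι x = x → ∃ c : k, algebraMap k K c = x)
    (b : k) (hb : b ≠ 0)
    -- Q = (K, ι, b) is the crossed-product quaternion k-algebra, a division ring,
    -- containing K via φ, with j·j = b, j·x = ι(x)·j, and Q = K ⊕ K·j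
    (Q : Type) [DivisionRing Q] [Algebra k Q]
    (φ : K →ₐ[k] Q) (j : Q)
    (hj2 : j * j = algebraMap k Q b)
    (hjx : ∀ x : K, j * φ x = φ (ι x) * j)
    (hQdec : ∀ q : Q, ∃! p : K × K, q = φ p.1 + φ p.2 * j)
    -- σ is the automorphism of K(t) acting as ι on K with σ(t) = b·t⁻¹
    (σ : RatFunc K ≃+* RatFunc K)
    (hσK : ∀ x : K, σ (algebraMap K (RatFunc K) x) = algebraMap K (RatFunc K) (ι x))
    (hσt : σ RatFunc.X = algebraMap K (RatFunc K) (algebraMap k K b) * RatFunc.X⁻¹)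
    -- Q_F = Q ⊗_k F, identified with K(t) ⊕ K(t)·j : it contains K(t) via ψ and an
    -- element J (the image of j) with J·J = b, J·ψ(f) = ψ(σ f)·J, Q_F = ψ(K(t)) ⊕ ψ(K(t))·J,
    -- and Q embeds via φ' compatibly with φ and j
    (QF : Type) [Ring QF]
    (ψ : RatFunc K →+* QF) (J : QF)
    (hJ2 : J * J = ψ (algebraMap K (RatFunc K) (algebraMap k K b)))
    (hJf : ∀ f : RatFunc K, J * ψ f = ψ (σ f) * J)
    (hQFdec : ∀ q : QF, ∃! p : RatFunc K × RatFunc K, q = ψ p.1 + ψ p.2 * J)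
    (φ' : Q →+* QF)
    (hφ'K : ∀ x : K, φ' (φ x) = ψ (algebraMap K (RatFunc K) x))
    (hφ'j : φ' j = J)
    -- ε = 1 + j·t⁻¹
    (ε : QF) (hε : ε = 1 + J * ψ RatFunc.X⁻¹) :
    -- (i) the left ideal I = Q_F·ε equals K(t)·ε
    (∀ X : QF, (∃ Y : QF, X = Y * ε) ↔ ∃ f : RatFunc K, X = ψ f * ε) ∧
    -- (ii) the expression f·ε of an element of I, with f ∈ K(t), is unique
    (∀ f g : RatFunc K, ψ f * ε = ψ g * ε → f = g) ∧
    -- (iii) left multiplication Q_F → End_F(I) is an isomorphism of F-algebras: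
    -- left multiplication maps I to I, ...
    (∀ (x : QF) (f : RatFunc K), ∃ g : RatFunc K, x * (ψ f * ε) = ψ g * ε) ∧
    -- ... it is injective, ...
    (∀ x y : QF, (∀ f : RatFunc K, x * (ψ f * ε) = y * (ψ f * ε)) → x = y) ∧
    -- ... and every F-linear endomorphism of I is left multiplication by some x ∈ Q_F
    (∀ T : QF → QF,
      (∀ f g : RatFunc K, T (ψ f * ε + ψ g * ε) = T (ψ f * ε) + T (ψ g * ε)) →
      (∀ c f : RatFunc K, σ c = c → T (ψ c * (ψ f * ε)) = ψ c * T (ψ f * ε)) →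
      (∀ f : RatFunc K, ∃ g : RatFunc K, T (ψ f * ε) = ψ g * ε) →
      ∃ x : QF, ∀ f : RatFunc K, T (ψ f * ε) = x * (ψ f * ε)) := by

  classical
  set B : RatFunc K := algebraMap K (RatFunc K) (algebraMap k K b) with hB
  have hbK : algebraMap k K b ≠ 0 := by simpa using hb
  have hB0 : B ≠ 0 := by rw [hB]; simpa using hbK
  have hX0 : (RatFunc.X : RatFunc K) ≠ 0 := RatFunc.X_ne_zero
  have hσB : σ B = B := by rw [hB, hσK, ι.commutes]
  have hσX : σ RatFunc.X = B * RatFunc.X⁻¹ := hσt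
  have hσXi : σ (RatFunc.X⁻¹ : RatFunc K) = B⁻¹ * RatFunc.X := by
    rw [map_inv₀, hσX, mul_inv, inv_inv]
  set w : RatFunc K := B * RatFunc.X⁻¹ with hw
  have hw0 : w ≠ 0 := mul_ne_zero hB0 (inv_ne_zero hX0)
  have hX2 : (RatFunc.X : RatFunc K) ^ 2 ≠ B := by
    intro h
    have h' : algebraMap (Polynomial K) (RatFunc K) (Polynomial.X ^ 2)
        = algebraMap (Polynomial K) (RatFunc K) (Polynomial.C (algebraMap k K b)) := by
      rw [map_pow, RatFunc.algebraMap_X, RatFunc.algebraMap_C, ← RatFunc.algebraMap_eq_C]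
      exact h
    have h2 := RatFunc.algebraMap_injective K h'
    have h3 := congrArg Polynomial.natDegree h2
    simp [Polynomial.natDegree_X_pow] at h3
  have hXw : RatFunc.X - w ≠ 0 := by
    intro h
    apply hX2
    have hx : (RatFunc.X : RatFunc K) = w := by linear_combination h
    calc (RatFunc.X : RatFunc K) ^ 2 = RatFunc.X * (B * RatFunc.X⁻¹) := by
          rw [hw] at hx; rw [sq, ← hx]
      _ = B * (RatFunc.X * RatFunc.X⁻¹) := by ring
      _ = B := by rw [mul_inv_cancel₀ hX0, mul_one]
  have hσw : σ w = RatFunc.X := by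
    rw [hw, map_mul, hσB, hσXi, ← mul_assoc, mul_inv_cancel₀ hB0, one_mul]
  -- QF is nontrivial, hence ψ is injective
  have hnt : Nontrivial QF := by
    by_contra hcon
    rw [not_nontrivial_iff_subsingleton] at hcon
    obtain ⟨p, hp, hu⟩ := hQFdec 0
    have h1 := hu (1, 0) (Subsingleton.elim _ _)
    have h0 := hu (0, 0) (Subsingleton.elim _ _)
    exact one_ne_zero (congrArg Prod.fst (h1.trans h0.symm))
  have hψinj : Function.Injective ψ := ψ.injective
  -- σ is an involution
  have hσ2 : ∀ f : RatFunc K, σ (σ f) = f := by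
    intro f
    have h1 : J * J * ψ f = ψ (B * f) := by rw [hJ2, ← map_mul]
    have h2 : J * J * ψ f = ψ (σ (σ f) * B) := by
      rw [mul_assoc, hJf f, ← mul_assoc, hJf (σ f), mul_assoc, hJ2, ← map_mul]
    have h3 : B * f = σ (σ f) * B := hψinj (h1.symm.trans h2)
    have h4 : σ (σ f) * B = f * B := by rw [← h3]; ring
    exact mul_right_cancel₀ hB0 h4
  -- Key identity: J * ε = ψ w * ε
  have hJε : J * ε = ψ w * ε := by
    have hl : J * ε = J + ψ (w) := by
      rw [hε, mul_add, mul_one, ← mul_assoc, hJ2, ← map_mul, hw]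
    have hwJ : ψ w * J = J * ψ RatFunc.X := by rw [hJf RatFunc.X, hσX]
    have hr : ψ w * ε = ψ w + J := by
      rw [hε, mul_add, mul_one, ← mul_assoc, hwJ, mul_assoc, ← map_mul,
        mul_inv_cancel₀ hX0, map_one, mul_one]
    rw [hl, hr, add_comm]
  -- Decomposition of ψ f * ε
  have hfε : ∀ f : RatFunc K, ψ f * ε = ψ f + ψ (f * (B⁻¹ * RatFunc.X)) * J := by
    intro f
    rw [hε, mul_add, mul_one, ← mul_assoc, mul_assoc (ψ f), hJf, hσXi, ← mul_assoc,
      ← map_mul]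
  -- (ii) uniqueness
  have part2 : ∀ f g : RatFunc K, ψ f * ε = ψ g * ε → f = g := by
    intro f g h
    obtain ⟨p, hp, hu⟩ := hQFdec (ψ f * ε)
    have e1 := hu (f, f * (B⁻¹ * RatFunc.X)) (hfε f)
    have e2 := hu (g, g * (B⁻¹ * RatFunc.X)) (by rw [h]; exact hfε g)
    have := e1.trans e2.symm
    exact congrArg Prod.fst this
  -- multiplication formula
  have mul_into : ∀ u v f : RatFunc K,
      (ψ u + ψ v * J) * (ψ f * ε) = ψ (u * f + v * σ f * w) * ε := by
    intro u v f
    have h1 : ψ u * (ψ f * ε) = ψ (u * f) * ε := by rw [← mul_assoc, ← map_mul]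
    have h2 : ψ v * J * (ψ f * ε) = ψ (v * σ f * w) * ε := by
      calc ψ v * J * (ψ f * ε) = ψ v * (J * ψ f * ε) := by simp only [mul_assoc]
        _ = ψ v * (ψ (σ f) * J * ε) := by rw [hJf]
        _ = ψ v * (ψ (σ f) * (ψ w * ε)) := by rw [mul_assoc, hJε]
        _ = ψ (v * σ f * w) * ε := by simp only [map_mul, mul_assoc]
    rw [add_mul, h1, h2, map_add, add_mul]
  have hψ1ε : ψ (1 : RatFunc K) * ε = ε := by rw [map_one, one_mul]
  refine ⟨?_, part2, ?_, ?_, ?_⟩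
  · -- (i)
    intro X
    constructor
    · rintro ⟨Y, rfl⟩
      obtain ⟨p, hp, -⟩ := hQFdec Y
      refine ⟨p.1 * 1 + p.2 * σ 1 * w, ?_⟩
      rw [hp, ← mul_into p.1 p.2 1, hψ1ε]
    · rintro ⟨f, rfl⟩
      exact ⟨ψ f, rfl⟩
  · -- multiplication maps I to I
    intro x f
    obtain ⟨p, hp, -⟩ := hQFdec x
    exact ⟨p.1 * f + p.2 * σ f * w, by rw [hp, mul_into]⟩
  · -- injectivity
    intro x y h
    obtain ⟨p, hp, -⟩ := hQFdec x
    obtain ⟨q, hq, -⟩ := hQFdec y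
    have e1 : p.1 * 1 + p.2 * σ 1 * w = q.1 * 1 + q.2 * σ 1 * w := by
      apply part2
      rw [← mul_into, ← mul_into, ← hp, ← hq]; exact h 1
    have e2 : p.1 * RatFunc.X + p.2 * σ RatFunc.X * w
        = q.1 * RatFunc.X + q.2 * σ RatFunc.X * w := by
      apply part2
      rw [← mul_into, ← mul_into, ← hp, ← hq]; exact h RatFunc.X
    rw [map_one] at e1
    rw [hσX] at e2
    have hv : p.2 = q.2 := by
      have h3 : (p.2 - q.2) * (w * (RatFunc.X - w)) = 0 := by
        linear_combination RatFunc.X * e1 - e2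
      rcases mul_eq_zero.mp h3 with h4 | h4
      · linear_combination h4
      · exact absurd h4 (mul_ne_zero hw0 hXw)
    have hu : p.1 = q.1 := by linear_combination e1 - w * hv
    rw [hp, hq, hu, hv]
  · -- surjectivity onto F-linear endomorphisms
    intro T hT1 hT2 hT3
    choose τ hτ using hT3
    have τadd : ∀ f g : RatFunc K, τ (f + g) = τ f + τ g := by
      intro f g
      apply part2
      rw [← hτ]
      have hfg : ψ (f + g) * ε = ψ f * ε + ψ g * ε := by rw [map_add, add_mul]
      rw [hfg, hT1, hτ, hτ, map_add, add_mul]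
    have τsmul : ∀ c f : RatFunc K, σ c = c → τ (c * f) = c * τ f := by
      intro c f hc
      apply part2
      have h1 : ψ (c * f) * ε = ψ c * (ψ f * ε) := by rw [map_mul, mul_assoc]
      rw [← hτ, h1, hT2 c f hc, hτ, map_mul, ← mul_assoc]
    set A0 := τ 1 with hA0
    set B0 := τ RatFunc.X with hB0'
    set v : RatFunc K := (A0 * RatFunc.X - B0) / (w * (RatFunc.X - w)) with hv
    set u : RatFunc K := A0 - v * w with hu
    have e1 : u + v * w = A0 := by rw [hu]; ring
    have e2 : u * RatFunc.X + v * w ^ 2 = B0 := by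
      have h1 : v * (w * (RatFunc.X - w)) = A0 * RatFunc.X - B0 :=
        div_mul_cancel₀ _ (mul_ne_zero hw0 hXw)
      rw [hu]; linear_combination -h1
    refine ⟨ψ u + ψ v * J, ?_⟩
    intro f
    set d : RatFunc K := (f - σ f) / (RatFunc.X - w) with hd
    have hd' : d * (RatFunc.X - w) = f - σ f := div_mul_cancel₀ _ hXw
    set c : RatFunc K := f - d * RatFunc.X with hc
    have hσd : σ d = d := by
      rw [hd, map_div₀, map_sub, map_sub, hσ2, hσX, hσw]
      rw [show σ f - f = -(f - σ f) by ring, show w - RatFunc.X = -(RatFunc.X - w) by ring,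
        neg_div_neg_eq]
    have hσc : σ c = c := by
      rw [hc, map_sub, map_mul, hσd, hσX]
      linear_combination hd'
    have hσf : σ f = c + d * w := by rw [hc]; linear_combination hd'
    have hf' : f = c + d * RatFunc.X := by rw [hc]; ring
    have h5 : τ f = c * A0 + d * B0 := by
      have hff : f = c * 1 + d * RatFunc.X := by rw [hf']; ring
      calc τ f = τ (c * 1 + d * RatFunc.X) := by rw [← hff]
        _ = τ (c * 1) + τ (d * RatFunc.X) := τadd _ _
        _ = c * τ 1 + d * τ RatFunc.X := by rw [τsmul c 1 hσc, τsmul d RatFunc.X hσd]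
        _ = c * A0 + d * B0 := by rw [hA0, hB0']
    have h6 : τ f = u * f + v * σ f * w := by
      rw [h5, hσf, hf']
      linear_combination -c * e1 - d * e2
    rw [hτ, h6, ← mul_into]
end

section
/- The formula a(f·ε, g·ε) = u·(σ(f)·g − f·σ(g)) for f, g ∈ K(t) gives a well-defined nonzero alternating F-bilinear form a : I × I → F (well-defined since every element of I has a unique expression f·ε with f ∈ K(t)). Moreover, for every x ∈ Q (viewed inside Q_F via x ↦ x ⊗ 1) and every ξ ∈ I, the equation a(ξ, x·ξ) = 0 holds if and only if x ∈ k·1 or ξ = 0. -/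
open scoped TensorProduct

open Polynomial in
private lemma sigma_invol {k K : Type} [Field k] [Field K] [Algebra k K]
    (ι : K ≃ₐ[k] K) (hι2 : ∀ x : K, ι (ι x) = x) (b : k) (hb : b ≠ 0)
    (σ : RatFunc K ≃+* RatFunc K)
    (hσK : ∀ x : K, σ (algebraMap K (RatFunc K) x) = algebraMap K (RatFunc K) (ι x))
    (hσt : σ RatFunc.X = algebraMap K (RatFunc K) (algebraMap k K b) * RatFunc.X⁻¹) :
    ∀ f, σ (σ f) = f := by
  have hbK : algebraMap k K b ≠ 0 := by
    simpa using (map_ne_zero (algebraMap k K)).mpr hb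
  have hbne : (algebraMap K (RatFunc K)) (algebraMap k K b) ≠ 0 := by
    simpa using (map_ne_zero (algebraMap K (RatFunc K))).mpr hbK
  have hσb : σ ((algebraMap K (RatFunc K)) (algebraMap k K b))
      = algebraMap K (RatFunc K) (algebraMap k K b) := by
    rw [hσK, AlgEquiv.commutes]
  have hX : (RatFunc.X : RatFunc K) ≠ 0 := RatFunc.X_ne_zero
  have hσσX : σ (σ RatFunc.X) = RatFunc.X := by
    rw [hσt, map_mul, hσb, map_inv₀, hσt]
    field_simp
  have hpoly : ∀ p : Polynomial K,
      σ (σ (algebraMap (Polynomial K) (RatFunc K) p)) = algebraMap (Polynomial K) (RatFunc K) p := by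
    intro p
    induction p using Polynomial.induction_on with
    | C a =>
        rw [RatFunc.algebraMap_C, ← RatFunc.algebraMap_eq_C, hσK, hσK, hι2]
    | add p q hp hq => rw [map_add, map_add, map_add, hp, hq]
    | monomial n a ih =>
        rw [pow_succ, ← mul_assoc, map_mul, map_mul, map_mul, ih, RatFunc.algebraMap_X, hσσX]
  intro f
  conv_lhs => rw [← RatFunc.num_div_denom f]
  rw [map_div₀, map_div₀, hpoly, hpoly, RatFunc.num_div_denom]

open Polynomial in
private lemma quad_root_const {K : Type} [Field K] (s n : K) (lam : RatFunc K)
    (h : lam * lam - algebraMap K (RatFunc K) s * lam + algebraMap K (RatFunc K) n = 0) :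
    ∃ c : K, lam = algebraMap K (RatFunc K) c := by
  have hint : IsIntegral (Polynomial K) lam := by
    refine ⟨X ^ 2 + (C (-(C s)) * X + C (C n)), ?_, ?_⟩
    · exact Polynomial.monic_X_pow_add (lt_of_le_of_lt Polynomial.degree_linear_le
        (by norm_num : (1 : WithBot ℕ) < 2))
    · simp only [Polynomial.eval₂_add, Polynomial.eval₂_mul, Polynomial.eval₂_pow,
        Polynomial.eval₂_X, Polynomial.eval₂_C, Polynomial.eval₂_neg, map_neg,
        RatFunc.algebraMap_C, ← RatFunc.algebraMap_eq_C]
      linear_combination h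
  obtain ⟨q, hq⟩ := IsIntegrallyClosed.isIntegral_iff.mp hint
  have hpoly0 : q * q - C s * q + C n = 0 := by
    apply RatFunc.algebraMap_injective K
    simp only [map_add, map_sub, map_mul, hq, map_zero, RatFunc.algebraMap_C,
      ← RatFunc.algebraMap_eq_C]
    exact h
  have hq0 : q.natDegree = 0 := by
    by_contra hd
    have hqne : q ≠ 0 := fun h0 => hd (by simp [h0])
    have hmul : (q * q).natDegree = q.natDegree + q.natDegree := Polynomial.natDegree_mul hqne hqne
    have hqq : q * q = C s * q - C n := by linear_combination hpoly0
    have hle : (C s * q - C n).natDegree ≤ q.natDegree := by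
      refine le_trans (Polynomial.natDegree_sub_le _ _) ?_
      simp [Polynomial.natDegree_C]
      exact Polynomial.natDegree_C_mul_le _ _
    rw [hqq] at hmul
    omega
  refine ⟨q.coeff 0, ?_⟩
  rw [← hq]
  conv_lhs => rw [Polynomial.eq_C_of_natDegree_eq_zero hq0]
  rw [RatFunc.algebraMap_C, ← RatFunc.algebraMap_eq_C]

/-- The value `a(f·ε, g·ε) = u·(σ(f)·g − f·σ(g))` of the alternating form `a` on `I`,
expressed through the unique representations `f·ε`, `g·ε` of its arguments. -/
noncomputable def aForm {K : Type} [Field K] (σ : RatFunc K ≃+* RatFunc K) (u : K)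
    (f g : RatFunc K) : RatFunc K :=
  algebraMap K (RatFunc K) u * (σ f * g - f * σ g)

theorem alternating_form_on_I
    -- k is a field, K/k a degree-2 Galois extension with nontrivial automorphism ι,
    -- b a nonzero element of k
    (k K : Type) [Field k] [Field K] [Algebra k K]
    (hrank : Module.finrank k K = 2)
    (ι : K ≃ₐ[k] K) (hι : ∃ x : K, ι x ≠ x)
    (hι2 : ∀ x : K, ι (ι x) = x)
    (hfix : ∀ x : K, ι x = x → ∃ c : k, algebraMap k K c = x)
    (b : k) (hb : b ≠ 0)
    -- Q = (K, ι, b) is the crossed-product quaternion k-algebra, a division ring,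
    -- containing K via φ, with j·j = b, j·x = ι(x)·j, and Q = K ⊕ K·j
    (Q : Type) [DivisionRing Q] [Algebra k Q]
    (φ : K →ₐ[k] Q) (j : Q)
    (hj2 : j * j = algebraMap k Q b)
    (hjx : ∀ x : K, j * φ x = φ (ι x) * j)
    (hQdec : ∀ q : Q, ∃! p : K × K, q = φ p.1 + φ p.2 * j)
    -- σ is the automorphism of K(t) acting as ι on K with σ(t) = b·t⁻¹
    (σ : RatFunc K ≃+* RatFunc K)
    (hσK : ∀ x : K, σ (algebraMap K (RatFunc K) x) = algebraMap K (RatFunc K) (ι x))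
    (hσt : σ RatFunc.X = algebraMap K (RatFunc K) (algebraMap k K b) * RatFunc.X⁻¹)
    -- Q_F = Q ⊗_k F, identified with K(t) ⊕ K(t)·j : it contains K(t) via ψ and an
    -- element J (the image of j) with J·J = b, J·ψ(f) = ψ(σ f)·J, Q_F = ψ(K(t)) ⊕ ψ(K(t))·J,
    -- and Q embeds via φ' compatibly with φ and j
    (QF : Type) [Ring QF]
    (ψ : RatFunc K →+* QF) (J : QF)
    (hJ2 : J * J = ψ (algebraMap K (RatFunc K) (algebraMap k K b)))
    (hJf : ∀ f : RatFunc K, J * ψ f = ψ (σ f) * J)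
    (hQFdec : ∀ q : QF, ∃! p : RatFunc K × RatFunc K, q = ψ p.1 + ψ p.2 * J)
    (φ' : Q →+* QF)
    (hφ'K : ∀ x : K, φ' (φ x) = ψ (algebraMap K (RatFunc K) x))
    (hφ'j : φ' j = J)
    -- u is a nonzero element of K with ι(u) = -u
    (u : K) (hu : u ≠ 0) (hιu : ι u = -u)
    -- ε = 1 + j·t⁻¹
    (ε : QF) (hε : ε = 1 + J * ψ RatFunc.X⁻¹) :
    -- a is alternating ...
    (∀ f : RatFunc K, aForm σ u f f = 0) ∧
    -- ... nonzero ...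
    (∃ f g : RatFunc K, aForm σ u f g ≠ 0) ∧
    -- ... takes values in F = K(t)^σ ...
    (∀ f g : RatFunc K, σ (aForm σ u f g) = aForm σ u f g) ∧
    -- ... and is F-bilinear
    (∀ f₁ f₂ g : RatFunc K, aForm σ u (f₁ + f₂) g = aForm σ u f₁ g + aForm σ u f₂ g) ∧
    (∀ f g₁ g₂ : RatFunc K, aForm σ u f (g₁ + g₂) = aForm σ u f g₁ + aForm σ u f g₂) ∧
    (∀ c f g : RatFunc K, σ c = c →
      aForm σ u (c * f) g = c * aForm σ u f g ∧ aForm σ u f (c * g) = c * aForm σ u f g) ∧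
    -- for x ∈ Q and ξ = f·ε ∈ I (with x·ξ = g·ε), a(ξ, x·ξ) = 0 iff x ∈ k·1 or ξ = 0
    (∀ (x : Q) (f g : RatFunc K), φ' x * (ψ f * ε) = ψ g * ε →
      (aForm σ u f g = 0 ↔ (∃ c : k, x = algebraMap k Q c) ∨ ψ f * ε = 0)) := by
  have hσσ : ∀ f, σ (σ f) = f := sigma_invol ι hι2 b hb σ hσK hσt
  have hbK : algebraMap k K b ≠ 0 := by
    simpa using (map_ne_zero (algebraMap k K)).mpr hb
  have hbne : (algebraMap K (RatFunc K)) (algebraMap k K b) ≠ 0 := by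
    simpa using (map_ne_zero (algebraMap K (RatFunc K))).mpr hbK
  have hX : (RatFunc.X : RatFunc K) ≠ 0 := RatFunc.X_ne_zero
  have hune : algebraMap K (RatFunc K) u ≠ 0 := by
    simpa using (map_ne_zero (algebraMap K (RatFunc K))).mpr hu
  have hσu : σ (algebraMap K (RatFunc K) u) = - algebraMap K (RatFunc K) u := by
    rw [hσK, hιu, map_neg]
  have hσXinv : σ RatFunc.X⁻¹
      = (algebraMap K (RatFunc K) (algebraMap k K b))⁻¹ * RatFunc.X := by
    rw [map_inv₀, hσt, mul_inv_rev, inv_inv, mul_comm]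
  have hψeps : ∀ h : RatFunc K, ψ h * ε
      = ψ h + ψ (h * ((algebraMap K (RatFunc K) (algebraMap k K b))⁻¹ * RatFunc.X)) * J := by
    intro h
    rw [hε, mul_add, mul_one, hJf, ← mul_assoc, ← map_mul, hσXinv]
  have hinj : ∀ h₁ h₂ : RatFunc K, ψ h₁ * ε = ψ h₂ * ε → h₁ = h₂ := by
    intro h₁ h₂ hh
    obtain ⟨p, hp, hup⟩ := hQFdec (ψ h₁ * ε)
    have e1 := hup (h₁, h₁ * ((algebraMap K (RatFunc K) (algebraMap k K b))⁻¹ * RatFunc.X))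
      (hψeps h₁)
    have e2 := hup (h₂, h₂ * ((algebraMap K (RatFunc K) (algebraMap k K b))⁻¹ * RatFunc.X))
      (by rw [hh]; exact hψeps h₂)
    exact congrArg Prod.fst (e1.trans e2.symm)
  have hzero : ∀ h : RatFunc K, ψ h * ε = 0 → h = 0 := by
    intro h hh
    exact hinj h 0 (by rw [map_zero, zero_mul, hh])
  have hJe : J * ε = ψ (σ RatFunc.X) * ε := by
    have h1 : σ RatFunc.X * ((algebraMap K (RatFunc K) (algebraMap k K b))⁻¹ * RatFunc.X)
        = 1 := by
      rw [hσt]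
      field_simp
    rw [hψeps (σ RatFunc.X), h1, map_one, one_mul, hε, mul_add, mul_one, ← mul_assoc, hJ2,
      ← map_mul, ← hσt]
    exact add_comm _ _
  refine ⟨?_, ?_, ?_, ?_, ?_, ?_, ?_⟩
  · intro f
    simp only [aForm]
    ring
  · refine ⟨1, RatFunc.X, ?_⟩
    simp only [aForm, map_one, one_mul]
    intro hcontra
    rcases mul_eq_zero.mp hcontra with h | h
    · exact hune h
    · have hXX : RatFunc.X = σ RatFunc.X := by
        have := sub_eq_zero.mp h
        simpa using this
      rw [hσt] at hXX
      have h2 : RatFunc.X * RatFunc.X = algebraMap K (RatFunc K) (algebraMap k K b) := by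
        nth_rewrite 1 [hXX]
        rw [mul_assoc, inv_mul_cancel₀ hX, mul_one]
      have h3 : (Polynomial.X * Polynomial.X : Polynomial K)
          = Polynomial.C (algebraMap k K b) := by
        apply RatFunc.algebraMap_injective K
        rw [map_mul, RatFunc.algebraMap_X, RatFunc.algebraMap_C, ← RatFunc.algebraMap_eq_C]
        exact h2
      have h4 : ((Polynomial.X : Polynomial K) ^ 2).coeff 2
          = (Polynomial.C (algebraMap k K b)).coeff 2 := by
        rw [pow_two, h3]
      simp [Polynomial.coeff_X_pow, Polynomial.coeff_C] at h4
  · intro f g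
    simp only [aForm, map_mul, map_sub, hσσ, hσu]
    ring
  · intro f₁ f₂ g
    simp only [aForm, map_add]
    ring
  · intro f g₁ g₂
    simp only [aForm, map_add]
    ring
  · intro c f g hc
    constructor <;> · simp only [aForm, map_mul, hc]; ring
  · intro x f g hxfg
    obtain ⟨⟨x₀, x₁⟩, hxd, -⟩ := hQdec x
    have hφ'x : φ' x = ψ (algebraMap K (RatFunc K) x₀)
        + ψ (algebraMap K (RatFunc K) x₁) * J := by
      rw [hxd, map_add, map_mul, hφ'K, hφ'K, hφ'j]
    have hmul : ∀ h : RatFunc K, φ' x * (ψ h * ε)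
        = ψ (algebraMap K (RatFunc K) x₀ * h
          + algebraMap K (RatFunc K) x₁ * (σ h * σ RatFunc.X)) * ε := by
      intro h
      rw [hφ'x, map_add, add_mul, add_mul]
      congr 1
      · rw [← mul_assoc, ← map_mul]
      · calc ψ (algebraMap K (RatFunc K) x₁) * J * (ψ h * ε)
            = ψ (algebraMap K (RatFunc K) x₁) * ((J * ψ h) * ε) := by
              rw [mul_assoc, mul_assoc]
          _ = ψ (algebraMap K (RatFunc K) x₁) * (ψ (σ h) * (J * ε)) := by
              rw [hJf, mul_assoc]
          _ = ψ (algebraMap K (RatFunc K) x₁) * (ψ (σ h) * (ψ (σ RatFunc.X) * ε)) := by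
              rw [hJe]
          _ = ψ (algebraMap K (RatFunc K) x₁ * (σ h * σ RatFunc.X)) * ε := by
              rw [← mul_assoc (ψ (σ h)), ← map_mul, ← mul_assoc, ← map_mul]
    have hgf : g = algebraMap K (RatFunc K) x₀ * f
        + algebraMap K (RatFunc K) x₁ * (σ f * σ RatFunc.X) :=
      (hinj _ _ ((hmul f).symm.trans hxfg)).symm
    constructor
    · intro h0
      by_cases hfε : ψ f * ε = 0
      · exact Or.inr hfε
      left
      have hf0 : f ≠ 0 := fun h => hfε (by rw [h, map_zero, zero_mul])
      have hσf0 : σ f ≠ 0 := fun h => hf0 (by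
        have := congrArg σ h
        rwa [hσσ, map_zero] at this)
      have hsym : σ f * g = f * σ g := by
        rcases mul_eq_zero.mp h0 with h | h
        · exact absurd h hune
        · exact sub_eq_zero.mp h
      have hglam : g = g / f * f := by field_simp
      have hσlam : σ (g / f) = g / f := by
        rw [map_div₀, div_eq_div_iff hσf0 hf0]
        linear_combination -hsym
      have h1 : algebraMap K (RatFunc K) x₀ * f
          + algebraMap K (RatFunc K) x₁ * (σ f * σ RatFunc.X) = g / f * f :=
        hgf.symm.trans hglam
      have h2 := congrArg σ h1
      simp only [map_add, map_mul, hσK, hσσ, hσlam] at h2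
      have hXσX : RatFunc.X * σ RatFunc.X
          = algebraMap K (RatFunc K) (algebraMap k K b) := by
        rw [hσt, mul_comm RatFunc.X, mul_assoc, inv_mul_cancel₀ hX, mul_one]
      have e3 : (algebraMap K (RatFunc K) x₁ * (σ f * σ RatFunc.X))
            * (algebraMap K (RatFunc K) (ι x₁) * (f * RatFunc.X))
          = ((g / f - algebraMap K (RatFunc K) x₀) * f)
            * ((g / f - algebraMap K (RatFunc K) (ι x₀)) * σ f) := by
        have e1 : algebraMap K (RatFunc K) x₁ * (σ f * σ RatFunc.X)
            = (g / f - algebraMap K (RatFunc K) x₀) * f := by linear_combination h1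
        have e2 : algebraMap K (RatFunc K) (ι x₁) * (f * RatFunc.X)
            = (g / f - algebraMap K (RatFunc K) (ι x₀)) * σ f := by linear_combination h2
        rw [e1, e2]
      have hquad' : ((g / f - algebraMap K (RatFunc K) x₀)
            * (g / f - algebraMap K (RatFunc K) (ι x₀))) * (f * σ f)
          = (algebraMap K (RatFunc K) x₁ * algebraMap K (RatFunc K) (ι x₁)
            * algebraMap K (RatFunc K) (algebraMap k K b)) * (f * σ f) := by
        linear_combination (algebraMap K (RatFunc K) x₁ * algebraMap K (RatFunc K) (ι x₁)
          * f * σ f) * hXσX - e3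
      have hquad := mul_right_cancel₀ (mul_ne_zero hf0 hσf0) hquad'
      have hq2 : g / f * (g / f) - algebraMap K (RatFunc K) (x₀ + ι x₀) * (g / f)
          + algebraMap K (RatFunc K) (x₀ * ι x₀ - algebraMap k K b * (x₁ * ι x₁)) = 0 := by
        simp only [map_add, map_sub, map_mul]
        linear_combination hquad
      obtain ⟨c₀, hc₀⟩ := quad_root_const _ _ (g / f) hq2
      have hιc₀ : ι c₀ = c₀ := by
        have h5 := hσlam
        rw [hc₀, hσK] at h5
        exact (algebraMap K (RatFunc K)).injective h5
      obtain ⟨c, hc⟩ := hfix c₀ hιc₀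
      refine ⟨c, ?_⟩
      by_contra hne
      have hy : x - algebraMap k Q c ≠ 0 := sub_ne_zero.mpr hne
      have hφ'c : φ' (algebraMap k Q c) = ψ (g / f) := by
        rw [← φ.commutes c, hφ'K, hc, ← hc₀]
      have hkey : φ' (x - algebraMap k Q c) * (ψ f * ε) = 0 := by
        rw [map_sub, sub_mul, hxfg, hφ'c, ← mul_assoc, ← map_mul, ← hglam, sub_self]
      have hfe0 : ψ f * ε = 0 := by
        have h9 : φ' ((x - algebraMap k Q c)⁻¹) * (φ' (x - algebraMap k Q c) * (ψ f * ε))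
            = ψ f * ε := by
          rw [← mul_assoc, ← map_mul, inv_mul_cancel₀ hy, map_one, one_mul]
        rw [hkey, mul_zero] at h9
        exact h9.symm
      exact absurd hfe0 hfε
    · rintro (⟨c, rfl⟩ | hfe)
      · have hφ'c : φ' (algebraMap k Q c)
            = ψ (algebraMap K (RatFunc K) (algebraMap k K c)) := by
          rw [← φ.commutes c, hφ'K]
        have h6 : ψ (algebraMap K (RatFunc K) (algebraMap k K c) * f) * ε = ψ g * ε := by
          rw [map_mul, mul_assoc, ← hφ'c, hxfg]
        have hg : algebraMap K (RatFunc K) (algebraMap k K c) * f = g := hinj _ _ h6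
        rw [← hg]
        simp only [aForm, map_mul, hσK, AlgEquiv.commutes]
        ring
      · have hf0 : f = 0 := hzero f hfe
        have hg0 : g = 0 := hzero g (by rw [← hxfg, hfe, mul_zero])
        simp [aForm, hf0, hg0]
end

section
/- Let s be a sesquilinear form on a finitely generated right Q-module V, with associated even skew-hermitian form h_s. Let d be a natural number and v₀, …, v_d ∈ V be such that q̃(v₀,…,v_d) = 0. If s(v_d, v_d) ∉ k·1, then h_s(v_d, v_d) ≠ 0. -/
open scoped TensorProduct

noncomputable def Pp {k K : Type} [Field k] [Field K] [Algebra k K] (ι : K ≃ₐ[k] K) (b : k)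
    (u : K) (d : ℕ) (c0 c1 : K) (i i' : ℕ) : Polynomial K :=
  Polynomial.C (u * c0 * (algebraMap k K b) ^ i) * Polynomial.X ^ (2 * d + 1 + i' - i)
  + Polynomial.C (u * c1 * (algebraMap k K b) ^ (i + i' + 1)) * Polynomial.X ^ (2 * d + 1 - (i + i' + 1))
  - Polynomial.C (u * ι c0 * (algebraMap k K b) ^ i') * Polynomial.X ^ (2 * d + 1 + i - i')
  - Polynomial.C (u * ι c1) * Polynomial.X ^ (2 * d + 1 + (i + i' + 1))

lemma Pp_map {k K : Type} [Field k] [Field K] [Algebra k K] (ι : K ≃ₐ[k] K) (b : k) (u : K)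
    (d : ℕ) (c0 c1 : K) (i i' : ℕ) (hi : i ≤ d) (hi' : i' ≤ d) :
    algebraMap (Polynomial K) (RatFunc K) (Pp ι b u d c0 c1 i i') =
      RatFunc.X ^ (2 * d + 1) *
        (algebraMap K (RatFunc K) (u * c0 * (algebraMap k K b) ^ i) * RatFunc.X ^ i' * (RatFunc.X⁻¹) ^ i
        + algebraMap K (RatFunc K) (u * c1 * (algebraMap k K b) ^ (i + i' + 1)) * (RatFunc.X⁻¹) ^ (i + i' + 1)
        - algebraMap K (RatFunc K) (u * ι c0 * (algebraMap k K b) ^ i') * RatFunc.X ^ i * (RatFunc.X⁻¹) ^ i'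
        - algebraMap K (RatFunc K) (u * ι c1) * RatFunc.X ^ (i + i' + 1)) := by
  have hX : (RatFunc.X : RatFunc K) ≠ 0 := RatFunc.X_ne_zero
  unfold Pp
  simp only [map_add, map_sub, map_mul, map_pow, RatFunc.algebraMap_C, RatFunc.algebraMap_X,
    RatFunc.algebraMap_eq_C]
  rw [pow_sub₀ (RatFunc.X : RatFunc K) hX (by omega : i ≤ 2 * d + 1 + i'),
    pow_sub₀ (RatFunc.X : RatFunc K) hX (by omega : i + i' + 1 ≤ 2 * d + 1),
    pow_sub₀ (RatFunc.X : RatFunc K) hX (by omega : i' ≤ 2 * d + 1 + i)]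
  simp only [inv_pow]
  field_simp
  ring

lemma Pp_coeff {k K : Type} [Field k] [Field K] [Algebra k K] (ι : K ≃ₐ[k] K) (b : k) (u : K)
    (d : ℕ) (c0 c1 : K) (i i' : ℕ) (hi : i ≤ d) (hi' : i' ≤ d) :
    (Pp ι b u d c0 c1 i i').coeff (4 * d + 2) = if i = d ∧ i' = d then -(u * ι c1) else 0 := by
  unfold Pp
  simp only [Polynomial.coeff_add, Polynomial.coeff_sub, Polynomial.coeff_C_mul,
    Polynomial.coeff_X_pow, mul_ite, mul_one, mul_zero]
  split_ifs <;> first | omega | ring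

theorem hs_nonzero_of_isotropic_of_not_in_k
    -- k is a field, K/k a degree-2 Galois extension with nontrivial automorphism ι,
    -- b a nonzero element of k
    (k K : Type) [Field k] [Field K] [Algebra k K]
    (hrank : Module.finrank k K = 2)
    (ι : K ≃ₐ[k] K) (hι : ∃ x : K, ι x ≠ x)
    (hι2 : ∀ x : K, ι (ι x) = x)
    (hfix : ∀ x : K, ι x = x → ∃ c : k, algebraMap k K c = x)
    (b : k) (hb : b ≠ 0)
    -- Q = (K, ι, b) is the crossed-product quaternion k-algebra, a division ring,
    -- containing K via φ, with j·j = b, j·x = ι(x)·j, and Q = K ⊕ K·j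
    (Q : Type) [DivisionRing Q] [Algebra k Q]
    (φ : K →ₐ[k] Q) (j : Q)
    (hj2 : j * j = algebraMap k Q b)
    (hjx : ∀ x : K, j * φ x = φ (ι x) * j)
    (hQdec : ∀ q : Q, ∃! p : K × K, q = φ p.1 + φ p.2 * j)
    -- the canonical involution of Q
    (conj : Q → Q)
    (hconj_add : ∀ a b : Q, conj (a + b) = conj a + conj b)
    (hconj_mul : ∀ a b : Q, conj (a * b) = conj b * conj a)
    (hconj_K : ∀ x : K, conj (φ x) = φ (ι x))
    (hconj_j : conj j = -j)
    -- σ is the automorphism of K(t) acting as ι on K with σ(t) = b·t⁻¹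
    (σ : RatFunc K ≃+* RatFunc K)
    (hσK : ∀ x : K, σ (algebraMap K (RatFunc K) x) = algebraMap K (RatFunc K) (ι x))
    (hσt : σ RatFunc.X = algebraMap K (RatFunc K) (algebraMap k K b) * RatFunc.X⁻¹)
    -- Q_F = Q ⊗_k F, identified with K(t) ⊕ K(t)·j : it contains K(t) via ψ and an
    -- element J (the image of j) with J·J = b, J·ψ(f) = ψ(σ f)·J, Q_F = ψ(K(t)) ⊕ ψ(K(t))·J,
    -- and Q embeds via φ' compatibly with φ and j
    (QF : Type) [Ring QF]
    (ψ : RatFunc K →+* QF) (J : QF)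
    (hJ2 : J * J = ψ (algebraMap K (RatFunc K) (algebraMap k K b)))
    (hJf : ∀ f : RatFunc K, J * ψ f = ψ (σ f) * J)
    (hQFdec : ∀ q : QF, ∃! p : RatFunc K × RatFunc K, q = ψ p.1 + ψ p.2 * J)
    (φ' : Q →+* QF)
    (hφ'K : ∀ x : K, φ' (φ x) = ψ (algebraMap K (RatFunc K) x))
    (hφ'j : φ' j = J)
    -- u is a nonzero element of K with ι(u) = -u
    (u : K) (hu : u ≠ 0) (hιu : ι u = -u)
    -- V is a finitely generated right Q-module and s a sesquilinear form on V
    (V : Type) [AddCommGroup V] [Module Qᵐᵒᵖ V] [Module.Finite Qᵐᵒᵖ V]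
    (s : V → V → Q)
    (hs1 : ∀ v v' w : V, s (v + v') w = s v w + s v' w)
    (hs2 : ∀ v w w' : V, s v (w + w') = s v w + s v w')
    (hsesq : ∀ (v w : V) (x y : Q),
      s (MulOpposite.op x • v) (MulOpposite.op y • w) = conj x * s v w * y)
    -- r x i is the unique element of K(t) with x·tⁱ·ε = (r x i)·ε
    (r : Q → ℕ → RatFunc K)
    (hr : ∀ (x : Q) (i : ℕ),
      φ' x * (ψ (RatFunc.X ^ i) * (1 + J * ψ RatFunc.X⁻¹)) =
        ψ (r x i) * (1 + J * ψ RatFunc.X⁻¹))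
    (d : ℕ) (v : Fin (d + 1) → V)
    -- q̃(v₀, …, v_d) = 0
    (hq : ((∑ i : Fin (d + 1), aForm σ u (RatFunc.X ^ (i : ℕ)) (r (s (v i) (v i)) (i : ℕ))) +
      ∑ i : Fin (d + 1), ∑ i' : Fin (d + 1),
        if (i : ℕ) < (i' : ℕ) then
          aForm σ u (RatFunc.X ^ (i : ℕ))
            (r (s (v i) (v i') - conj (s (v i') (v i))) (i' : ℕ))
        else 0) = 0)
    -- s(v_d, v_d) ∉ k·1
    (hnot : ¬ ∃ c : k, s (v (Fin.last d)) (v (Fin.last d)) = algebraMap k Q c) :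
    -- h_s(v_d, v_d) ≠ 0
    s (v (Fin.last d)) (v (Fin.last d)) -
      conj (s (v (Fin.last d)) (v (Fin.last d))) ≠ 0 := by
    classical
  -- notation
  have hX0 : (RatFunc.X : RatFunc K) ≠ 0 := RatFunc.X_ne_zero
  have hbK0 : algebraMap k K b ≠ 0 := (map_ne_zero _).mpr hb
  have hbR0 : algebraMap K (RatFunc K) (algebraMap k K b) ≠ 0 := (map_ne_zero _).mpr hbK0
  -- decomposition of elements of Q
  have hdec : ∀ q : Q, ∃ p : K × K, q = φ p.1 + φ p.2 * j := fun q => (hQdec q).exists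
  choose p hp using hdec
  -- sigma facts
  have hσbR : σ (algebraMap K (RatFunc K) (algebraMap k K b)) =
      algebraMap K (RatFunc K) (algebraMap k K b) := by
    rw [hσK, AlgEquiv.commutes]
  have hσinvX : σ (RatFunc.X⁻¹) = (algebraMap K (RatFunc K) (algebraMap k K b))⁻¹ * RatFunc.X := by
    rw [map_inv₀, hσt, mul_inv, inv_inv]
  -- epsilon facts
  have heps : ∀ f : RatFunc K, ψ f * (1 + J * ψ RatFunc.X⁻¹) =
      ψ f + ψ (f * ((algebraMap K (RatFunc K) (algebraMap k K b))⁻¹ * RatFunc.X)) * J := by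
    intro f
    rw [mul_add, mul_one, hJf, hσinvX, ← mul_assoc, ← map_mul]
  have hinj : ∀ f g : RatFunc K,
      ψ f * (1 + J * ψ RatFunc.X⁻¹) = ψ g * (1 + J * ψ RatFunc.X⁻¹) → f = g := by
    intro f g h
    have h1 := heps f
    have h2 := heps g
    rw [h] at h1
    have h1' : (fun pp : RatFunc K × RatFunc K =>
        ψ g * (1 + J * ψ RatFunc.X⁻¹) = ψ pp.1 + ψ pp.2 * J)
        (f, f * ((algebraMap K (RatFunc K) (algebraMap k K b))⁻¹ * RatFunc.X)) := h1
    have h2' : (fun pp : RatFunc K × RatFunc K =>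
        ψ g * (1 + J * ψ RatFunc.X⁻¹) = ψ pp.1 + ψ pp.2 * J)
        (g, g * ((algebraMap K (RatFunc K) (algebraMap k K b))⁻¹ * RatFunc.X)) := h2
    have := (hQFdec (ψ g * (1 + J * ψ RatFunc.X⁻¹))).unique h1' h2'
    exact congrArg Prod.fst this
  have hJeps : J * (1 + J * ψ RatFunc.X⁻¹) =
      ψ (algebraMap K (RatFunc K) (algebraMap k K b) * RatFunc.X⁻¹) * (1 + J * ψ RatFunc.X⁻¹) := by
    rw [mul_add, mul_one, ← mul_assoc, hJ2, ← map_mul, heps]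
    have hone : algebraMap K (RatFunc K) (algebraMap k K b) * RatFunc.X⁻¹ *
        ((algebraMap K (RatFunc K) (algebraMap k K b))⁻¹ * RatFunc.X) = 1 := by
      rw [mul_mul_mul_comm, mul_inv_cancel₀ hbR0, inv_mul_cancel₀ hX0, one_mul]
    rw [hone, map_one, one_mul, add_comm]
  -- formula for r
  have hreq : ∀ (x : Q) (i : ℕ), r x i =
      algebraMap K (RatFunc K) (p x).1 * RatFunc.X ^ i +
        algebraMap K (RatFunc K) (p x).2 *
          (algebraMap K (RatFunc K) (algebraMap k K b)) ^ (i + 1) * (RatFunc.X⁻¹) ^ (i + 1) := by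
    intro x i
    apply hinj
    rw [← hr x i]
    have hJpart : J * (ψ (RatFunc.X ^ i) * (1 + J * ψ RatFunc.X⁻¹)) =
        ψ ((algebraMap K (RatFunc K) (algebraMap k K b) * RatFunc.X⁻¹) ^ (i + 1)) *
          (1 + J * ψ RatFunc.X⁻¹) := by
      rw [← mul_assoc, hJf, mul_assoc, hJeps, ← mul_assoc, ← map_mul, map_pow, hσt, ← pow_succ]
    conv_lhs => rw [hp x]
    rw [map_add, map_mul, hφ'K, hφ'K, hφ'j, add_mul, mul_assoc (ψ _) J, hJpart, ← mul_assoc,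
      ← mul_assoc, ← map_mul, ← map_mul, ← add_mul, ← map_add]
    congr 2
    rw [mul_pow]
    ring
  -- the value of aForm on basis pairs
  have haform : ∀ (x : Q) (i i' : ℕ), aForm σ u (RatFunc.X ^ i) (r x i') =
      algebraMap K (RatFunc K) (u * (p x).1 * (algebraMap k K b) ^ i) * RatFunc.X ^ i' *
          (RatFunc.X⁻¹) ^ i
        + algebraMap K (RatFunc K) (u * (p x).2 * (algebraMap k K b) ^ (i + i' + 1)) *
          (RatFunc.X⁻¹) ^ (i + i' + 1)
        - algebraMap K (RatFunc K) (u * ι ((p x).1) * (algebraMap k K b) ^ i') * RatFunc.X ^ i *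
          (RatFunc.X⁻¹) ^ i'
        - algebraMap K (RatFunc K) (u * ι ((p x).2)) * RatFunc.X ^ (i + i' + 1) := by
    intro x i i'
    rw [hreq]
    have hbC0 : RatFunc.C (algebraMap k K b) ≠ 0 := by
      rwa [← RatFunc.algebraMap_eq_C]
    simp only [aForm, map_add, map_mul, map_pow, map_inv₀, hσt, hσK, AlgEquiv.commutes]
    have hB1 : (algebraMap K (RatFunc K) (algebraMap k K b)) ^ (i' + 1) *
        ((algebraMap K (RatFunc K) (algebraMap k K b))⁻¹) ^ (i' + 1) = 1 := by
      rw [← mul_pow, mul_inv_cancel₀ hbR0, one_pow]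
    field_simp [hbC0]
    linear_combination (-(algebraMap K (RatFunc K) u * RatFunc.X * RatFunc.X ^ i * RatFunc.X ^ i' *
      algebraMap K (RatFunc K) (ι ((p x).2)))) * hB1
  -- the polynomial identity
  have key : ∀ (y : Q) (i i' : Fin (d + 1)),
      algebraMap (Polynomial K) (RatFunc K) (Pp ι b u d (p y).1 (p y).2 (i : ℕ) (i' : ℕ)) =
        RatFunc.X ^ (2 * d + 1) * aForm σ u (RatFunc.X ^ (i : ℕ)) (r y (i' : ℕ)) := by
    intro y i i'
    rw [haform, Pp_map ι b u d _ _ _ _ i.is_le i'.is_le]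
  have hΨP : algebraMap (Polynomial K) (RatFunc K)
      ((∑ i : Fin (d + 1), Pp ι b u d (p (s (v i) (v i))).1 (p (s (v i) (v i))).2 (i : ℕ) (i : ℕ)) +
        ∑ i : Fin (d + 1), ∑ i' : Fin (d + 1),
          if (i : ℕ) < (i' : ℕ) then
            Pp ι b u d (p (s (v i) (v i') - conj (s (v i') (v i)))).1
              (p (s (v i) (v i') - conj (s (v i') (v i)))).2 (i : ℕ) (i' : ℕ)
          else 0) = 0 := by
    rw [map_add, map_sum, map_sum]
    calc (∑ i : Fin (d + 1), algebraMap (Polynomial K) (RatFunc K)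
            (Pp ι b u d (p (s (v i) (v i))).1 (p (s (v i) (v i))).2 (i : ℕ) (i : ℕ))) +
          ∑ i : Fin (d + 1), algebraMap (Polynomial K) (RatFunc K)
            (∑ i' : Fin (d + 1), if (i : ℕ) < (i' : ℕ) then
              Pp ι b u d (p (s (v i) (v i') - conj (s (v i') (v i)))).1
                (p (s (v i) (v i') - conj (s (v i') (v i)))).2 (i : ℕ) (i' : ℕ) else 0)
        = RatFunc.X ^ (2 * d + 1) *
            ((∑ i : Fin (d + 1), aForm σ u (RatFunc.X ^ (i : ℕ)) (r (s (v i) (v i)) (i : ℕ))) +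
            ∑ i : Fin (d + 1), ∑ i' : Fin (d + 1),
              if (i : ℕ) < (i' : ℕ) then
                aForm σ u (RatFunc.X ^ (i : ℕ))
                  (r (s (v i) (v i') - conj (s (v i') (v i))) (i' : ℕ))
              else 0) := by
          rw [mul_add, Finset.mul_sum, Finset.mul_sum]
          congr 1
          · exact Finset.sum_congr rfl fun i _ => key _ i i
          · refine Finset.sum_congr rfl fun i _ => ?_
            rw [map_sum, Finset.mul_sum]
            refine Finset.sum_congr rfl fun i' _ => ?_
            rw [apply_ite (algebraMap (Polynomial K) (RatFunc K)), map_zero, mul_ite, mul_zero]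
            exact if_congr Iff.rfl (key _ i i') rfl
      _ = 0 := by rw [hq, mul_zero]
  have hP0 : ((∑ i : Fin (d + 1), Pp ι b u d (p (s (v i) (v i))).1 (p (s (v i) (v i))).2 (i : ℕ) (i : ℕ)) +
        ∑ i : Fin (d + 1), ∑ i' : Fin (d + 1),
          if (i : ℕ) < (i' : ℕ) then
            Pp ι b u d (p (s (v i) (v i') - conj (s (v i') (v i)))).1
              (p (s (v i) (v i') - conj (s (v i') (v i)))).2 (i : ℕ) (i' : ℕ)
          else 0) = 0 := by
    apply RatFunc.algebraMap_injective K
    rw [hΨP, map_zero]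
  -- extract the coefficient at 4d+2
  have hco : (0 : K) = -(u * ι ((p (s (v (Fin.last d)) (v (Fin.last d)))).2)) := by
    have h1 := congrArg (fun q : Polynomial K => q.coeff (4 * d + 2)) hP0
    simp only [Polynomial.coeff_zero] at h1
    rw [Polynomial.coeff_add, Polynomial.finset_sum_coeff, Polynomial.finset_sum_coeff] at h1
    have e1 : ∀ i : Fin (d + 1),
        (Pp ι b u d (p (s (v i) (v i))).1 (p (s (v i) (v i))).2 (i : ℕ) (i : ℕ)).coeff (4 * d + 2)
        = if i = Fin.last d then -(u * ι ((p (s (v i) (v i))).2)) else 0 := by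
      intro i
      rw [Pp_coeff ι b u d _ _ _ _ i.is_le i.is_le]
      by_cases h : i = Fin.last d
      · rw [if_pos h, if_pos]
        subst h; simp [Fin.val_last]
      · rw [if_neg h, if_neg]
        intro hcon
        exact h (Fin.ext (by simpa [Fin.val_last] using hcon.1))
    have e2 : ∀ i i' : Fin (d + 1),
        ((if (i : ℕ) < (i' : ℕ) then
            Pp ι b u d (p (s (v i) (v i') - conj (s (v i') (v i)))).1
              (p (s (v i) (v i') - conj (s (v i') (v i)))).2 (i : ℕ) (i' : ℕ)
          else 0) : Polynomial K).coeff (4 * d + 2) = 0 := by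
      intro i i'
      rw [apply_ite (fun q : Polynomial K => q.coeff (4 * d + 2)), Polynomial.coeff_zero]
      by_cases h : (i : ℕ) < (i' : ℕ)
      · rw [if_pos h, Pp_coeff ι b u d _ _ _ _ i.is_le i'.is_le, if_neg]
        intro hcon
        obtain ⟨hc1, hc2⟩ := hcon
        omega
      · rw [if_neg h]
    rw [Finset.sum_congr rfl (fun i _ => e1 i)] at h1
    rw [Finset.sum_congr rfl (fun i _ => Polynomial.finset_sum_coeff _ _ _)] at h1
    rw [Finset.sum_congr rfl (fun i _ => Finset.sum_congr rfl (fun i' _ => e2 i i'))] at h1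
    simp only [Finset.sum_const_zero, add_zero, Finset.sum_ite_eq', Finset.mem_univ,
      if_pos] at h1
    exact h1.symm
  -- conclude c1 = 0
  have hc1 : (p (s (v (Fin.last d)) (v (Fin.last d)))).2 = 0 := by
    have h2 : u * ι ((p (s (v (Fin.last d)) (v (Fin.last d)))).2) = 0 := by
      have := hco.symm
      rwa [neg_eq_zero] at this
    rcases mul_eq_zero.mp h2 with h | h
    · exact absurd h hu
    · exact ι.injective (by rw [h, map_zero])
  -- finish
  have hxd : s (v (Fin.last d)) (v (Fin.last d)) =
      φ ((p (s (v (Fin.last d)) (v (Fin.last d)))).1) := by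
    conv_lhs => rw [hp (s (v (Fin.last d)) (v (Fin.last d)))]
    rw [hc1, map_zero, zero_mul, add_zero]
  intro h0
  have hcj : s (v (Fin.last d)) (v (Fin.last d)) =
      conj (s (v (Fin.last d)) (v (Fin.last d))) := sub_eq_zero.mp h0
  have hφeq : φ (ι ((p (s (v (Fin.last d)) (v (Fin.last d)))).1)) =
      φ ((p (s (v (Fin.last d)) (v (Fin.last d)))).1) := by
    rw [← hconj_K, ← hxd, ← hcj, hxd]
  have hfixc0 : ι ((p (s (v (Fin.last d)) (v (Fin.last d)))).1) =
      (p (s (v (Fin.last d)) (v (Fin.last d)))).1 :=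
    φ.toRingHom.injective hφeq
  obtain ⟨c, hc⟩ := hfix _ hfixc0
  exact hnot ⟨c, by rw [hxd, ← hc, φ.commutes]⟩
end
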